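/- Let k be a commutative ring, λ ∈ k, X a set, and A = MonoidAlgebra k (FreeMonoid X). Let Δ_λ : A → A ⊗[k] A be the k-linear map defined on the basis of words by Δ_λ(1) = −λ(1⊗1) and, for m ≥ 1, Δ_λ(x₁⋯x_m) = Σ_{i=1}^{m} (x₁⋯x_i) ⊗ (x_i⋯x_m) + λ Σ_{i=1}^{m−1} (x₁⋯x_i) ⊗ (x_{i+1}⋯x_m). Then Δ_λ is coassociative: (id ⊗ Δ_λ) ∘ Δ_λ = (Δ_λ ⊗ id) ∘ Δ_λ as maps A → A ⊗[k] A ⊗[k] A. -/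

import Mathlib

set_option maxHeartbeats 1000000
set_option synthInstance.maxHeartbeats 400000


open TensorProduct

/-- The basis element of the monoid algebra of the free monoid corresponding to
the word `x₁ ⋯ x_m` given by the list `l = [x₁, …, x_m]`. -/
noncomputable def word (k : Type*) [CommRing k] {X : Type*} (l : List X) :
    MonoidAlgebra k (FreeMonoid X) :=
  MonoidAlgebra.of k (FreeMonoid X) (FreeMonoid.ofList l)

private lemma sum_tri {M : Type*} [AddCommMonoid M] (m : ℕ) (f : ℕ → ℕ → M) :
    ∑ i ∈ Finset.range m, ∑ j ∈ Finset.range (i + 1), f j i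
      = ∑ j ∈ Finset.range m, ∑ i ∈ Finset.range (m - j), f j (j + i) := by
  induction m with
  | zero => simp
  | succ n ih =>
    rw [Finset.sum_range_succ, ih,
      Finset.sum_range_succ (fun j => ∑ i ∈ Finset.range (n + 1 - j), f j (j + i))]
    have h1 : ∀ j ∈ Finset.range n, ∑ i ∈ Finset.range (n + 1 - j), f j (j + i)
        = (∑ i ∈ Finset.range (n - j), f j (j + i)) + f j n := by
      intro j hj
      have hj' : j < n := Finset.mem_range.mp hj
      have h2 : n + 1 - j = (n - j) + 1 := by omega
      rw [h2, Finset.sum_range_succ]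
      congr 2
      omega
    rw [Finset.sum_congr rfl h1, Finset.sum_add_distrib]
    have h3 : n + 1 - n = 1 := by omega
    rw [h3, Finset.sum_range_one, Finset.sum_range_succ (fun j => f j n), add_zero]
    abel

private lemma sum_tri' {M : Type*} [AddCommMonoid M] (m : ℕ) (f : ℕ → ℕ → M) :
    ∑ i ∈ Finset.range m, ∑ j ∈ Finset.range i, f j i
      = ∑ j ∈ Finset.range (m - 1), ∑ i ∈ Finset.range (m - 1 - j), f j (j + 1 + i) := by
  cases m with
  | zero => simp
  | succ n =>
    rw [Finset.sum_range_succ']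
    simp only [Finset.range_zero, Finset.sum_empty, add_zero, Nat.add_sub_cancel]
    rw [sum_tri n (fun j i => f j (i + 1))]
    exact Finset.sum_congr rfl fun j _ => Finset.sum_congr rfl fun i _ => by
      congr 1; omega

private lemma sum_trunc {M : Type*} [AddCommMonoid M] {N n : ℕ} (h : n ≤ N) (f : ℕ → M)
    (hf : ∀ j, n ≤ j → f j = 0) :
    ∑ j ∈ Finset.range N, f j = ∑ j ∈ Finset.range n, f j :=
  (Finset.sum_subset (Finset.range_subset_range.2 h) fun x _ hx =>
    hf x (le_of_not_gt fun hc => hx (Finset.mem_range.2 hc))).symm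

/-- The linear map `Δ_λ` on the monoid algebra of the free monoid on `X`,
defined on the word basis by `Δ_λ(1) = -λ (1 ⊗ 1)` and
`Δ_λ(x₁⋯x_m) = Σ_{i=1}^m (x₁⋯x_i) ⊗ (x_i⋯x_m) + λ Σ_{i=1}^{m−1} (x₁⋯x_i) ⊗ (x_{i+1}⋯x_m)`,
is coassociative. -/
theorem coassoc_of_word_coproduct
    {k : Type*} [CommRing k] {X : Type*} (lam : k)
    (Δ : MonoidAlgebra k (FreeMonoid X) →ₗ[k]
      MonoidAlgebra k (FreeMonoid X) ⊗[k] MonoidAlgebra k (FreeMonoid X))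
    (hone : Δ 1 = -(lam • ((1 : MonoidAlgebra k (FreeMonoid X))
      ⊗ₜ[k] (1 : MonoidAlgebra k (FreeMonoid X)))))
    (hword : ∀ l : List X, l ≠ [] →
      Δ (word k l)
        = (∑ i ∈ Finset.range l.length,
            word k (l.take (i + 1)) ⊗ₜ[k] word k (l.drop i))
          + lam • ∑ i ∈ Finset.range (l.length - 1),
            word k (l.take (i + 1)) ⊗ₜ[k] word k (l.drop (i + 1))) :
    ∀ a : MonoidAlgebra k (FreeMonoid X),
      (TensorProduct.assoc k _ _ _) (LinearMap.rTensor _ Δ (Δ a))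
        = LinearMap.lTensor _ Δ (Δ a) := by
  -- expansion of `Δ` on a prefix of a word
  have delta_take : ∀ (l : List X), l ≠ [] → ∀ i < l.length,
      Δ (word k (l.take (i + 1)))
        = (∑ j ∈ Finset.range (i + 1),
            word k (l.take (j + 1)) ⊗ₜ[k] word k ((l.drop j).take (i + 1 - j)))
          + lam • ∑ j ∈ Finset.range i,
            word k (l.take (j + 1)) ⊗ₜ[k] word k ((l.drop (j + 1)).take (i - j)) := by
    intro l hl i hi
    have hlp : 0 < l.length := List.length_pos_iff.mpr hl
    have hne : l.take (i + 1) ≠ [] := by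
      rw [← List.length_pos_iff, List.length_take]
      omega
    have hlen : (l.take (i + 1)).length = i + 1 := by
      rw [List.length_take]; omega
    rw [hword _ hne, hlen]
    congr 1
    · refine Finset.sum_congr rfl fun j hj => ?_
      have hj' : j < i + 1 := Finset.mem_range.mp hj
      rw [List.take_take, List.drop_take, show (j + 1) ⊓ (i + 1) = j + 1 by omega]
    · congr 1
      refine Finset.sum_congr rfl fun j hj => ?_
      have hj' : j < i := Finset.mem_range.mp hj
      rw [List.take_take, List.drop_take, show (j + 1) ⊓ (i + 1) = j + 1 by omega,
        show i + 1 - (j + 1) = i - j by omega]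
  -- expansion of `Δ` on a suffix of a word
  have delta_drop : ∀ (l : List X), ∀ j < l.length,
      Δ (word k (l.drop j))
        = (∑ i ∈ Finset.range (l.length - j),
            word k ((l.drop j).take (i + 1)) ⊗ₜ[k] word k (l.drop (j + i)))
          + lam • ∑ i ∈ Finset.range (l.length - j - 1),
            word k ((l.drop j).take (i + 1)) ⊗ₜ[k] word k (l.drop (j + i + 1)) := by
    intro l j hj
    have hne : l.drop j ≠ [] := by
      rw [← List.length_pos_iff, List.length_drop]
      omega
    have hlen : (l.drop j).length = l.length - j := List.length_drop
    rw [hword _ hne, hlen]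
    congr 1
    · refine Finset.sum_congr rfl fun i _ => ?_
      rw [List.drop_drop]
    · congr 1
      refine Finset.sum_congr rfl fun i _ => ?_
      rw [List.drop_drop, show j + (i + 1) = j + i + 1 from by omega]
  -- the statement for basis words
  have key : ∀ l : List X,
      (TensorProduct.assoc k _ _ _) (LinearMap.rTensor _ Δ (Δ (word k l)))
        = LinearMap.lTensor _ Δ (Δ (word k l)) := by
    intro l
    rcases eq_or_ne l [] with rfl | hl
    · have h1 : word k ([] : List X) = 1 := by
        simp only [word]
        exact map_one _
      rw [h1, hone]
      simp only [map_neg, map_smul, LinearMap.rTensor_tmul, LinearMap.lTensor_tmul, hone,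
        neg_tmul, tmul_neg, ← TensorProduct.smul_tmul', tmul_smul,
        TensorProduct.assoc_tmul, neg_neg, smul_neg]
      rw [map_neg (TensorProduct.assoc k (MonoidAlgebra k (FreeMonoid X)) (MonoidAlgebra k (FreeMonoid X)) (MonoidAlgebra k (FreeMonoid X))), map_smul (TensorProduct.assoc k (MonoidAlgebra k (FreeMonoid X)) (MonoidAlgebra k (FreeMonoid X)) (MonoidAlgebra k (FreeMonoid X))), TensorProduct.assoc_tmul]
      rw [smul_neg, neg_neg]
    · set m := l.length with hm
      have hm1 : 1 ≤ m := List.length_pos_iff.mpr hl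
      rw [hword l hl]
      -- expand the left-hand side
      have LHSeq : (TensorProduct.assoc k _ _ _) (LinearMap.rTensor (MonoidAlgebra k (FreeMonoid X)) Δ
          ((∑ i ∈ Finset.range m, word k (l.take (i + 1)) ⊗ₜ[k] word k (l.drop i))
            + lam • ∑ i ∈ Finset.range (m - 1),
                word k (l.take (i + 1)) ⊗ₜ[k] word k (l.drop (i + 1))))
          = (∑ i ∈ Finset.range m, ∑ j ∈ Finset.range (i + 1),
              word k (l.take (j + 1)) ⊗ₜ[k] (word k ((l.drop j).take (i + 1 - j)) ⊗ₜ[k] word k (l.drop i)))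
            + lam • (∑ i ∈ Finset.range m, ∑ j ∈ Finset.range i,
              word k (l.take (j + 1)) ⊗ₜ[k] (word k ((l.drop (j + 1)).take (i - j)) ⊗ₜ[k] word k (l.drop i)))
            + lam • (∑ i ∈ Finset.range (m - 1), ∑ j ∈ Finset.range (i + 1),
              word k (l.take (j + 1)) ⊗ₜ[k] (word k ((l.drop j).take (i + 1 - j)) ⊗ₜ[k] word k (l.drop (i + 1))))
            + lam • lam • (∑ i ∈ Finset.range (m - 1), ∑ j ∈ Finset.range i,
              word k (l.take (j + 1)) ⊗ₜ[k] (word k ((l.drop (j + 1)).take (i - j)) ⊗ₜ[k] word k (l.drop (i + 1)))) := by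
        simp only [map_add, map_smul, map_sum]
        have e1 : ∀ i ∈ Finset.range m,
            (TensorProduct.assoc k _ _ _) (LinearMap.rTensor (MonoidAlgebra k (FreeMonoid X)) Δ
              (word k (l.take (i + 1)) ⊗ₜ[k] word k (l.drop i)))
            = (∑ j ∈ Finset.range (i + 1),
                word k (l.take (j + 1)) ⊗ₜ[k] (word k ((l.drop j).take (i + 1 - j)) ⊗ₜ[k] word k (l.drop i)))
              + lam • ∑ j ∈ Finset.range i,
                word k (l.take (j + 1)) ⊗ₜ[k] (word k ((l.drop (j + 1)).take (i - j)) ⊗ₜ[k] word k (l.drop i)) := by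
          intro i hi
          rw [LinearMap.rTensor_tmul, delta_take l hl i (Finset.mem_range.mp hi), add_tmul,
            ← TensorProduct.smul_tmul', TensorProduct.sum_tmul, TensorProduct.sum_tmul,
            map_add, map_smul, map_sum, map_sum]
          simp only [TensorProduct.assoc_tmul]
        have e2 : ∀ i ∈ Finset.range (m - 1),
            (TensorProduct.assoc k _ _ _) (LinearMap.rTensor (MonoidAlgebra k (FreeMonoid X)) Δ
              (word k (l.take (i + 1)) ⊗ₜ[k] word k (l.drop (i + 1))))
            = (∑ j ∈ Finset.range (i + 1),
                word k (l.take (j + 1)) ⊗ₜ[k] (word k ((l.drop j).take (i + 1 - j)) ⊗ₜ[k] word k (l.drop (i + 1))))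
              + lam • ∑ j ∈ Finset.range i,
                word k (l.take (j + 1)) ⊗ₜ[k] (word k ((l.drop (j + 1)).take (i - j)) ⊗ₜ[k] word k (l.drop (i + 1))) := by
          intro i hi
          have hi' : i < m - 1 := Finset.mem_range.mp hi
          rw [LinearMap.rTensor_tmul, delta_take l hl i (by omega), add_tmul,
            ← TensorProduct.smul_tmul', TensorProduct.sum_tmul, TensorProduct.sum_tmul,
            map_add, map_smul, map_sum, map_sum]
          simp only [TensorProduct.assoc_tmul]
        rw [Finset.sum_congr rfl e1, Finset.sum_congr rfl e2, Finset.sum_add_distrib,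
          Finset.sum_add_distrib, ← Finset.smul_sum, ← Finset.smul_sum, smul_add]
        abel
      -- expand the right-hand side
      have RHSeq : LinearMap.lTensor (MonoidAlgebra k (FreeMonoid X)) Δ
          ((∑ j ∈ Finset.range m, word k (l.take (j + 1)) ⊗ₜ[k] word k (l.drop j))
            + lam • ∑ j ∈ Finset.range (m - 1),
                word k (l.take (j + 1)) ⊗ₜ[k] word k (l.drop (j + 1)))
          = (∑ j ∈ Finset.range m, ∑ i ∈ Finset.range (m - j),
              word k (l.take (j + 1)) ⊗ₜ[k] (word k ((l.drop j).take (i + 1)) ⊗ₜ[k] word k (l.drop (j + i))))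
            + lam • (∑ j ∈ Finset.range m, ∑ i ∈ Finset.range (m - j - 1),
              word k (l.take (j + 1)) ⊗ₜ[k] (word k ((l.drop j).take (i + 1)) ⊗ₜ[k] word k (l.drop (j + i + 1))))
            + lam • (∑ j ∈ Finset.range (m - 1), ∑ i ∈ Finset.range (m - (j + 1)),
              word k (l.take (j + 1)) ⊗ₜ[k] (word k ((l.drop (j + 1)).take (i + 1)) ⊗ₜ[k] word k (l.drop (j + 1 + i))))
            + lam • lam • (∑ j ∈ Finset.range (m - 1), ∑ i ∈ Finset.range (m - (j + 1) - 1),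
              word k (l.take (j + 1)) ⊗ₜ[k] (word k ((l.drop (j + 1)).take (i + 1)) ⊗ₜ[k] word k (l.drop (j + 1 + i + 1)))) := by
        simp only [map_add, map_smul, map_sum]
        have e1 : ∀ j ∈ Finset.range m,
            LinearMap.lTensor (MonoidAlgebra k (FreeMonoid X)) Δ
              (word k (l.take (j + 1)) ⊗ₜ[k] word k (l.drop j))
            = (∑ i ∈ Finset.range (m - j),
                word k (l.take (j + 1)) ⊗ₜ[k] (word k ((l.drop j).take (i + 1)) ⊗ₜ[k] word k (l.drop (j + i))))
              + lam • ∑ i ∈ Finset.range (m - j - 1),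
                word k (l.take (j + 1)) ⊗ₜ[k] (word k ((l.drop j).take (i + 1)) ⊗ₜ[k] word k (l.drop (j + i + 1))) := by
          intro j hj
          rw [LinearMap.lTensor_tmul, delta_drop l j (Finset.mem_range.mp hj), tmul_add,
            tmul_smul, TensorProduct.tmul_sum, TensorProduct.tmul_sum]
        have e2 : ∀ j ∈ Finset.range (m - 1),
            LinearMap.lTensor (MonoidAlgebra k (FreeMonoid X)) Δ
              (word k (l.take (j + 1)) ⊗ₜ[k] word k (l.drop (j + 1)))
            = (∑ i ∈ Finset.range (m - (j + 1)),
                word k (l.take (j + 1)) ⊗ₜ[k] (word k ((l.drop (j + 1)).take (i + 1)) ⊗ₜ[k] word k (l.drop (j + 1 + i))))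
              + lam • ∑ i ∈ Finset.range (m - (j + 1) - 1),
                word k (l.take (j + 1)) ⊗ₜ[k] (word k ((l.drop (j + 1)).take (i + 1)) ⊗ₜ[k] word k (l.drop (j + 1 + i + 1))) := by
          intro j hj
          have hj' : j < m - 1 := Finset.mem_range.mp hj
          rw [LinearMap.lTensor_tmul, delta_drop l (j + 1) (by omega), tmul_add,
            tmul_smul, TensorProduct.tmul_sum, TensorProduct.tmul_sum]
        rw [Finset.sum_congr rfl e1, Finset.sum_congr rfl e2, Finset.sum_add_distrib,
          Finset.sum_add_distrib, ← Finset.smul_sum, ← Finset.smul_sum, smul_add]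
        abel
      rw [LHSeq, RHSeq]
      -- match the four pieces
      have p1 : (∑ i ∈ Finset.range m, ∑ j ∈ Finset.range (i + 1),
              word k (l.take (j + 1)) ⊗ₜ[k] (word k ((l.drop j).take (i + 1 - j)) ⊗ₜ[k] word k (l.drop i)))
          = ∑ j ∈ Finset.range m, ∑ i ∈ Finset.range (m - j),
              word k (l.take (j + 1)) ⊗ₜ[k] (word k ((l.drop j).take (i + 1)) ⊗ₜ[k] word k (l.drop (j + i))) := by
        rw [sum_tri m (fun j i => word k (l.take (j + 1)) ⊗ₜ[k]
          (word k ((l.drop j).take (i + 1 - j)) ⊗ₜ[k] word k (l.drop i)))]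
        refine Finset.sum_congr rfl fun j _ => Finset.sum_congr rfl fun i _ => ?_
        rw [show j + i + 1 - j = i + 1 from by omega]
      have p2 : (∑ i ∈ Finset.range m, ∑ j ∈ Finset.range i,
              word k (l.take (j + 1)) ⊗ₜ[k] (word k ((l.drop (j + 1)).take (i - j)) ⊗ₜ[k] word k (l.drop i)))
          = ∑ j ∈ Finset.range (m - 1), ∑ i ∈ Finset.range (m - (j + 1)),
              word k (l.take (j + 1)) ⊗ₜ[k] (word k ((l.drop (j + 1)).take (i + 1)) ⊗ₜ[k] word k (l.drop (j + 1 + i))) := by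
        rw [sum_tri' m (fun j i => word k (l.take (j + 1)) ⊗ₜ[k]
          (word k ((l.drop (j + 1)).take (i - j)) ⊗ₜ[k] word k (l.drop i)))]
        refine Finset.sum_congr rfl fun j hj => ?_
        refine Finset.sum_congr (by congr 1; omega) fun i _ => ?_
        rw [show j + 1 + i - j = i + 1 from by omega]
      have p3 : (∑ i ∈ Finset.range (m - 1), ∑ j ∈ Finset.range (i + 1),
              word k (l.take (j + 1)) ⊗ₜ[k] (word k ((l.drop j).take (i + 1 - j)) ⊗ₜ[k] word k (l.drop (i + 1))))
          = ∑ j ∈ Finset.range m, ∑ i ∈ Finset.range (m - j - 1),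
              word k (l.take (j + 1)) ⊗ₜ[k] (word k ((l.drop j).take (i + 1)) ⊗ₜ[k] word k (l.drop (j + i + 1))) := by
        rw [sum_tri (m - 1) (fun j i => word k (l.take (j + 1)) ⊗ₜ[k]
          (word k ((l.drop j).take (i + 1 - j)) ⊗ₜ[k] word k (l.drop (i + 1))))]
        rw [sum_trunc (Nat.sub_le m 1) (fun j => ∑ i ∈ Finset.range (m - j - 1),
          word k (l.take (j + 1)) ⊗ₜ[k] (word k ((l.drop j).take (i + 1)) ⊗ₜ[k] word k (l.drop (j + i + 1))))
          (fun j hj => by simp [show m - j - 1 = 0 from by omega])]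
        refine Finset.sum_congr rfl fun j hj => ?_
        refine Finset.sum_congr (by congr 1; omega) fun i _ => ?_
        rw [show j + i + 1 - j = i + 1 from by omega]
      have p4 : (∑ i ∈ Finset.range (m - 1), ∑ j ∈ Finset.range i,
              word k (l.take (j + 1)) ⊗ₜ[k] (word k ((l.drop (j + 1)).take (i - j)) ⊗ₜ[k] word k (l.drop (i + 1))))
          = ∑ j ∈ Finset.range (m - 1), ∑ i ∈ Finset.range (m - (j + 1) - 1),
              word k (l.take (j + 1)) ⊗ₜ[k] (word k ((l.drop (j + 1)).take (i + 1)) ⊗ₜ[k] word k (l.drop (j + 1 + i + 1))) := by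
        rw [sum_tri' (m - 1) (fun j i => word k (l.take (j + 1)) ⊗ₜ[k]
          (word k ((l.drop (j + 1)).take (i - j)) ⊗ₜ[k] word k (l.drop (i + 1))))]
        rw [sum_trunc (show m - 1 - 1 ≤ m - 1 from Nat.sub_le _ _) (fun j => ∑ i ∈ Finset.range (m - (j + 1) - 1),
          word k (l.take (j + 1)) ⊗ₜ[k] (word k ((l.drop (j + 1)).take (i + 1)) ⊗ₜ[k] word k (l.drop (j + 1 + i + 1))))
          (fun j hj => by simp [show m - (j + 1) - 1 = 0 from by omega])]
        refine Finset.sum_congr rfl fun j hj => ?_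
        refine Finset.sum_congr (by congr 1; omega) fun i _ => ?_
        rw [show j + 1 + i - j = i + 1 from by omega]
      rw [p1, p2, p3, p4]
      abel
  -- reduce the general case to basis words by linearity
  intro a
  induction a using MonoidAlgebra.induction_linear with
  | zero => simp
  | add f g hf hg => simp [map_add, hf, hg]
  | single w b =>
    have hw : (MonoidAlgebra.single w b : MonoidAlgebra k (FreeMonoid X)) = b • word k (FreeMonoid.toList w) := by
      rw [word, MonoidAlgebra.of_apply, FreeMonoid.ofList_toList, MonoidAlgebra.smul_single',
        mul_one]
    rw [hw]
    simp only [map_smul]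
    rw [key]
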